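/- For every integer K ≥ 2, every δ ∈ (0,1], and every sample size n > (4/3)·log(1/δ), the minimax rate satisfies r_n*(δ) ≥ (2·log(K−1)·log(1/δ))/(3n). -/

import Mathlib

open scoped ENNReal
open MeasureTheory

/-- The probability simplex on `Fin K`. -/
def simplex (K : ℕ) : Set (Fin K → ℝ) :=
  {p | (∀ i, 0 ≤ p i) ∧ ∑ i, p i = 1}

/-- Kullback–Leibler divergence between two vectors on `Fin K`, with the
conventions `0 · log 0 = 0` and value `∞` if `p i > 0 = q i` for some `i`. -/
noncomputable def klD {K : ℕ} (p q : Fin K → ℝ) : ℝ≥0∞ :=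
  if ∀ i, 0 < p i → 0 < q i then ENNReal.ofReal (∑ i, p i * Real.log (p i / q i)) else ⊤

/-- The law of `n` i.i.d. samples from the distribution `p` on `Fin K`. -/
noncomputable def iidMeasure (n K : ℕ) (p : Fin K → ℝ) : Measure (Fin n → Fin K) :=
  ∑ x : Fin n → Fin K, (∏ t, ENNReal.ofReal (p (x t))) • Measure.dirac x

/-- `countTo x t i` is the number of indices `s` among the first `t` samples with `x s = i`. -/
def countTo {n K : ℕ} (x : Fin n → Fin K) (t : ℕ) (i : Fin K) : ℕ :=
  (Finset.univ.filter (fun s : Fin n => (s : ℕ) < t ∧ x s = i)).card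

/-- The worst-case rate of an estimator at confidence level `1 - δ`:
the least `r` such that `sup_{p ∈ Δ^K} P(KL(p‖p̂) > r) ≤ δ` (with value `∞` if no such
`r` exists). -/
noncomputable def worstRate (n K : ℕ) (phat : (Fin n → Fin K) → (Fin K → ℝ)) (δ : ℝ) : ℝ≥0∞ :=
  ⨅ (r : ℝ≥0∞) (_ : (⨆ p : {p : Fin K → ℝ // p ∈ simplex K},
      iidMeasure n K p.val {x | r < klD p.val (phat x)}) ≤ ENNReal.ofReal δ), r

/-- The minimax rate: the infimum of worst-case rates over all estimators. -/
noncomputable def minimaxRate (n K : ℕ) (δ : ℝ) : ℝ≥0∞ :=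
  ⨅ phat : {f : (Fin n → Fin K) → (Fin K → ℝ) // ∀ x, f x ∈ simplex K},
    worstRate n K phat.val δ

lemma binary_kl_nonneg {l u : ℝ} (hl0 : 0 < l) (hl1 : l < 1) (hu0 : 0 < u) (hu1 : u < 1) :
    0 ≤ (1 - l) * Real.log ((1 - l) / u) + l * Real.log (l / (1 - u)) := by
  have h1l : 0 < 1 - l := by linarith
  have h1u : 0 < 1 - u := by linarith
  have h1 : Real.log (u / (1 - l)) ≤ u / (1 - l) - 1 :=
    Real.log_le_sub_one_of_pos (by positivity)
  have h2 : Real.log ((1 - u) / l) ≤ (1 - u) / l - 1 :=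
    Real.log_le_sub_one_of_pos (by positivity)
  have e1 : Real.log ((1 - l) / u) = - Real.log (u / (1 - l)) := by
    rw [← Real.log_inv]; congr 1; field_simp
  have e2 : Real.log (l / (1 - u)) = - Real.log ((1 - u) / l) := by
    rw [← Real.log_inv]; congr 1; field_simp
  have hml : (1 - l) * (u / (1 - l) - 1) + l * ((1 - u) / l - 1) = 0 := by
    field_simp
    ring
  have hA := mul_le_mul_of_nonneg_left h1 h1l.le
  have hB := mul_le_mul_of_nonneg_left h2 hl0.le
  rw [e1, e2]
  nlinarith

lemma kl_lower {l u b Kr : ℝ} (hl0 : 0 < l) (hl1 : l < 1) (hu : 0 < u) (hb : 0 < b)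
    (hKr : 1 ≤ Kr) (hbb : Kr * b ≤ 1 - u) :
    l * Real.log Kr ≤ (1 - l) * Real.log ((1 - l) / u) + l * Real.log (l / b) := by
  have hKr0 : 0 < Kr := lt_of_lt_of_le one_pos hKr
  have h1u : 0 < 1 - u := lt_of_lt_of_le (by positivity) hbb
  have hu1 : u < 1 := by linarith
  have hble : Real.log b ≤ Real.log (1 - u) - Real.log Kr := by
    have hb2 : b ≤ (1 - u) / Kr := by
      rw [le_div_iff₀ hKr0]; linarith [mul_comm b Kr]
    calc Real.log b ≤ Real.log ((1 - u) / Kr) := Real.log_le_log hb hb2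
      _ = Real.log (1 - u) - Real.log Kr := Real.log_div h1u.ne' hKr0.ne'
  have e3 : Real.log (l / b) = Real.log l - Real.log b := Real.log_div hl0.ne' hb.ne'
  have e4 : Real.log (l / (1 - u)) = Real.log l - Real.log (1 - u) :=
    Real.log_div hl0.ne' h1u.ne'
  have hbin := binary_kl_nonneg hl0 hl1 hu hu1
  rw [e4] at hbin
  rw [e3]
  nlinarith [mul_le_mul_of_nonneg_left hble hl0.le]

lemma exp_three_quarter_gt_two : (2 : ℝ) < Real.exp (3 / 4) := by
  have h9 : (2.7182818283 : ℝ) < Real.exp 1 := Real.exp_one_gt_d9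
  have hsplit : Real.exp 1 = Real.exp (3 / 4) * Real.exp (1 / 4) := by
    rw [← Real.exp_add]; norm_num
  have hq : Real.exp (1 / 4) ≤ 4 / 3 := by
    have := Real.add_one_le_exp (-(1/4) : ℝ)
    have hpos := Real.exp_pos (-(1/4) : ℝ)
    have hinv : Real.exp ((1:ℝ)/4) = (Real.exp (-(1/4) : ℝ))⁻¹ := by
      rw [← Real.exp_neg]; norm_num
    rw [hinv]
    rw [inv_le_comm₀ (by positivity) (by norm_num)]
    linarith
  nlinarith [Real.exp_pos ((3:ℝ)/4), Real.exp_pos ((1:ℝ)/4)]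

lemma exp_neg_lt {m : ℝ} (h0 : 0 < m) (h1 : m < 3 / 4) :
    Real.exp (-m) < 1 - 2 * m / 3 := by
  have ha : 0 < 1 - 4 * m / 3 := by linarith
  have hb : 0 < 4 * m / 3 := by linarith
  have hcvx := strictConvexOn_exp.2 (Set.mem_univ (0 : ℝ)) (Set.mem_univ (-(3/4) : ℝ))
    (by norm_num) ha hb (by ring)
  have harg : (1 - 4 * m / 3) • (0 : ℝ) + (4 * m / 3) • (-(3/4) : ℝ) = -m := by
    simp [smul_eq_mul]; ring
  rw [harg] at hcvx
  have he : Real.exp (-(3/4) : ℝ) < 1 / 2 := by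
    have h2 := exp_three_quarter_gt_two
    have : Real.exp (-(3/4) : ℝ) = (Real.exp ((3:ℝ)/4))⁻¹ := by
      rw [← Real.exp_neg]
    rw [this, inv_lt_comm₀ (by positivity) (by norm_num)]
    norm_num; linarith
  have h0' : Real.exp (0:ℝ) = 1 := Real.exp_zero
  rw [smul_eq_mul, smul_eq_mul, h0'] at hcvx
  nlinarith

/-- Lower bound on the iid measure of a set containing a given point. -/
lemma iid_ge {n K : ℕ} (p : Fin K → ℝ) (S : Set (Fin n → Fin K)) (x₀ : Fin n → Fin K)
    (hx : x₀ ∈ S) :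
    (∏ t, ENNReal.ofReal (p (x₀ t))) ≤ iidMeasure n K p S := by
  unfold iidMeasure
  rw [Measure.coe_finset_sum, Finset.sum_apply]
  have h0 : (∏ t, ENNReal.ofReal (p (x₀ t))) =
      ((∏ t, ENNReal.ofReal (p (x₀ t))) • Measure.dirac x₀) S := by
    rw [Measure.smul_apply, Measure.dirac_apply_of_mem hx, smul_eq_mul, mul_one]
  rw [h0]
  exact Finset.single_le_sum
    (f := fun x : Fin n → Fin K => ((∏ t, ENNReal.ofReal (p (x t))) • Measure.dirac x) S)
    (fun i _ => zero_le) (Finset.mem_univ x₀)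

/-- minimax lower bound of order log(K-1)·log(1/δ)/n. -/
theorem logK_lower_bound (K : ℕ) (hK : 2 ≤ K) (δ : ℝ) (hδ : δ ∈ Set.Ioc (0 : ℝ) 1)
    (n : ℕ) (hn : (4/3 : ℝ) * Real.log (1/δ) < (n : ℝ)) :
    ENNReal.ofReal (2 * Real.log ((K : ℝ) - 1) * Real.log (1/δ) / (3 * n)) ≤
      minimaxRate n K δ := by
  obtain ⟨hδ0, hδ1⟩ := hδ
  rcases eq_or_lt_of_le hδ1 with heq | hδlt
  · subst heq
    simp
  -- setup constants
  set L : ℝ := Real.log (1/δ) with hL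
  have hLpos : 0 < L := by
    rw [hL, one_div, Real.log_inv]
    have := Real.log_neg hδ0 hδlt
    linarith
  have hnpos : (0 : ℝ) < n := lt_trans (by positivity) hn
  have hnne : (n : ℝ) ≠ 0 := hnpos.ne'
  set m : ℝ := L / n with hm
  have hm0 : 0 < m := by positivity
  have hm34 : m < 3 / 4 := by
    rw [hm, div_lt_iff₀ hnpos]
    linarith
  set l : ℝ := 2 * m / 3 with hl
  have hl0 : 0 < l := by positivity
  have hl12 : l < 1 / 2 := by rw [hl]; linarith
  have hl1 : l < 1 := by linarith
  have h1l : 0 < 1 - l := by linarith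
  have hexp : Real.exp (-m) < 1 - l := by
    have := exp_neg_lt hm0 hm34
    rw [hl]; linarith
  -- target as ofReal (l * log (K-1))
  have hKr : (1 : ℝ) ≤ (K : ℝ) - 1 := by
    have : (2 : ℝ) ≤ (K : ℝ) := by exact_mod_cast hK
    linarith
  have htarget : ENNReal.ofReal (2 * Real.log ((K : ℝ) - 1) * Real.log (1/δ) / (3 * n)) =
      ENNReal.ofReal (l * Real.log ((K : ℝ) - 1)) := by
    congr 1
    rw [hl, hm, hL]
    field_simp
  haveI : NeZero K := ⟨by omega⟩
  rw [htarget]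
  -- outer structure
  unfold minimaxRate worstRate
  refine le_iInf fun phat => le_iInf fun r => le_iInf fun hcond => ?_
  by_contra hcon
  push_neg at hcon
  -- hcon : r < ofReal (l * log (K-1))
  -- adversarial construction
  set x₀ : Fin n → Fin K := fun _ => (0 : Fin K) with hx₀
  set q : Fin K → ℝ := phat.val x₀ with hqdef
  have hq : q ∈ simplex K := phat.property x₀
  have hKpos : 0 < K := by omega
  -- choose j minimizing q over nonzero indices
  have hne : (Finset.univ.erase (0 : Fin K)).Nonempty := by
    rw [← Finset.card_pos, Finset.card_erase_of_mem (Finset.mem_univ _), Finset.card_univ,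
      Fintype.card_fin]
    omega
  obtain ⟨j, hjmem, hjmin⟩ := Finset.exists_min_image (Finset.univ.erase (0 : Fin K)) q hne
  have hj0 : j ≠ 0 := Finset.ne_of_mem_erase hjmem
  -- the adversarial distribution
  set p : Fin K → ℝ := fun i => (if i = 0 then 1 - l else 0) + (if i = j then l else 0)
    with hpdef
  have hp0 : p 0 = 1 - l := by simp [hpdef, Ne.symm hj0]
  have hpj : p j = l := by simp [hpdef, hj0]
  have hpother : ∀ i, i ≠ 0 → i ≠ j → p i = 0 := by
    intro i h1 h2; simp [hpdef, h1, h2]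
  have hpmem : p ∈ simplex K := by
    constructor
    · intro i
      rw [hpdef]
      dsimp only
      split <;> split <;> linarith
    · rw [hpdef]
      rw [Finset.sum_add_distrib, Finset.sum_ite_eq' Finset.univ (0 : Fin K) (fun _ => 1 - l),
        Finset.sum_ite_eq' Finset.univ j (fun _ => l)]
      simp
  -- count of nonzero indices
  have hcard : ((Finset.univ.erase (0 : Fin K)).card : ℝ) = (K : ℝ) - 1 := by
    rw [Finset.card_erase_of_mem (Finset.mem_univ _), Finset.card_univ, Fintype.card_fin,
      Nat.cast_sub (by omega)]
    simp
  -- KL lower bound at x₀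
  have hklD : ENNReal.ofReal (l * Real.log ((K : ℝ) - 1)) ≤ klD p q := by
    unfold klD
    by_cases hq0 : 0 < q 0
    · by_cases hqj : 0 < q j
      · have hcondpos : ∀ i, 0 < p i → 0 < q i := by
          intro i hi
          by_cases h1 : i = 0
          · rwa [h1]
          by_cases h2 : i = j
          · rwa [h2]
          · rw [hpother i h1 h2] at hi; exact absurd hi (lt_irrefl 0)
        rw [if_pos hcondpos]
        apply ENNReal.ofReal_le_ofReal
        -- evaluate the sum
        have hsum : ∑ i, p i * Real.log (p i / q i) =
            (1 - l) * Real.log ((1 - l) / q 0) + l * Real.log (l / q j) := by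
          rw [← Finset.sum_subset (Finset.subset_univ ({0, j} : Finset (Fin K)))
            (by
              intro i _ hi
              simp only [Finset.mem_insert, Finset.mem_singleton, not_or] at hi
              rw [hpother i hi.1 hi.2, zero_mul])]
          rw [Finset.sum_pair (Ne.symm hj0), hp0, hpj]
        rw [hsum]
        -- the minimality bound : (K-1) * q j ≤ 1 - q 0
        have hsum_erase : ∑ i ∈ Finset.univ.erase (0 : Fin K), q i = 1 - q 0 := by
          have := Finset.sum_erase_add Finset.univ q (Finset.mem_univ (0 : Fin K))
          rw [hq.2] at this
          linarith
        have hmin : ((K : ℝ) - 1) * q j ≤ 1 - q 0 := by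
          have h1 : ∑ _i ∈ Finset.univ.erase (0 : Fin K), q j ≤
              ∑ i ∈ Finset.univ.erase (0 : Fin K), q i :=
            Finset.sum_le_sum (fun i hi => hjmin i hi)
          rw [Finset.sum_const, nsmul_eq_mul, hsum_erase] at h1
          rw [← hcard]
          exact h1
        exact kl_lower hl0 hl1 hq0 hqj hKr hmin
      · rw [if_neg (by
          intro hall
          exact hqj (hall j (by rw [hpj]; exact hl0)))]
        exact le_top
    · rw [if_neg (by
        intro hall
        exact hq0 (hall 0 (by rw [hp0]; exact h1l)))]
      exact le_top
  -- x₀ belongs to the bad event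
  have hx₀mem : x₀ ∈ {x | r < klD p (phat.val x)} := by
    show r < klD p (phat.val x₀)
    exact lt_of_lt_of_le hcon (by rw [← hqdef]; exact hklD)
  -- probability lower bound
  have hprob : ENNReal.ofReal ((1 - l) ^ n) ≤
      iidMeasure n K p {x | r < klD p (phat.val x)} := by
    have := iid_ge p {x | r < klD p (phat.val x)} x₀ hx₀mem
    calc ENNReal.ofReal ((1 - l) ^ n) = ENNReal.ofReal (1 - l) ^ n :=
          ENNReal.ofReal_pow h1l.le n
      _ = ∏ t : Fin n, ENNReal.ofReal (p (x₀ t)) := by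
          have hpt : ∀ t : Fin n, ENNReal.ofReal (p (x₀ t)) = ENNReal.ofReal (1 - l) := by
            intro t
            have : x₀ t = 0 := by rw [hx₀]
            rw [this, hp0]
          rw [Finset.prod_congr rfl (fun t _ => hpt t), Finset.prod_const, Finset.card_univ,
            Fintype.card_fin]
      _ ≤ _ := this
  -- the probability beats δ
  have hdelta : δ < (1 - l) ^ n := by
    have hdexp : δ = Real.exp (-m) ^ n := by
      rw [← Real.exp_nat_mul]
      have : (n : ℝ) * (-m) = -L := by
        rw [hm]; field_simp
      rw [this]
      rw [hL, one_div, Real.log_inv]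
      simp [Real.exp_log hδ0]
    rw [hdexp]
    exact pow_lt_pow_left₀ hexp (Real.exp_pos _).le (by
      intro h
      rw [h] at hnpos
      simp at hnpos)
  have hlt : ENNReal.ofReal δ < iidMeasure n K p {x | r < klD p (phat.val x)} :=
    lt_of_lt_of_le ((ENNReal.ofReal_lt_ofReal_iff (by positivity)).2 hdelta) hprob
  -- contradiction with hcond
  have hle : iidMeasure n K p {x | r < klD p (phat.val x)} ≤ ENNReal.ofReal δ := by
    refine le_trans ?_ hcond
    exact le_iSup (fun pp : {p : Fin K → ℝ // p ∈ simplex K} =>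
      iidMeasure n K pp.val {x | r < klD pp.val (phat.val x)}) ⟨p, hpmem⟩
  exact absurd (lt_of_lt_of_le hlt hle) (lt_irrefl _)
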